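/- arXiv:1305.6597 — 8 statements merged into one kernel-verified Lean document; each statement's English description precedes it below -/
import Mathlib

section
/- Let q = 2^r, let t ≥ 3 be an integer which is not a power of 2, and let a be a nonzero element of F_q. Then the polynomial H(X,Y) = a·((X+1)^t + X^t + 1)/X + Y^{t−2} ∈ F_q[X,Y] is irreducible over the algebraic closure of F_q. (Here X divides (X+1)^t + X^t + 1 in F_q[X] since the characteristic is 2 and t is not a power of 2, so H is a well-defined polynomial.) -/
section Aux

open Polynomial IntermediateField

universe u

/-- Char 2 version of the Kummer irreducibility criterion. -/
theorem X_pow_sub_C_irreducible_char_two {K : Type u} [Field K] [CharP K 2] {n : ℕ}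
    (hn : n ≠ 0) {a : K} (ha : ∀ p : ℕ, p.Prime → p ∣ n → ∀ b : K, b ^ p ≠ a) :
    Irreducible (X ^ n - C a) := by
  revert hn
  induction n using induction_on_primes generalizing K a with
  | zero => exact fun hn => absurd rfl hn
  | one => exact fun _ => by simpa using irreducible_X_sub_C a
  | prime_mul p n hp IH =>
    intro hn
    rw [mul_comm]
    apply X_pow_mul_sub_C_irreducible
      (X_pow_sub_C_irreducible_of_prime hp (ha p hp (dvd_mul_right _ _)))
    intro E _ _ x hx
    haveI : CharP E 2 := charP_of_injective_algebraMap (algebraMap K E).injective 2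
    have hint : IsIntegral K x := not_not.mp fun h ↦ by
      simpa only [degree_zero, degree_X_pow_sub_C hp.pos,
        WithBot.natCast_ne_bot] using congr_arg degree (hx.symm.trans (dif_neg h))
    haveI : CharP K⟮x⟯ 2 := charP_of_injective_algebraMap (algebraMap K K⟮x⟯).injective 2
    apply IH ?_ (right_ne_zero_of_mul hn)
    intros q hq hqn b hb
    apply ha q hq (dvd_mul_of_dvd_right hqn p) (Algebra.norm _ b)
    rw [← map_pow, hb, ← adjoin.powerBasis_gen hint,
      Algebra.PowerBasis.norm_gen_eq_coeff_zero_minpoly]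
    simp [minpoly_gen, hx, hp.ne_zero.symm, CharTwo.neg_eq]

lemma aux_rm_pow {K : Type u} [CommRing K] [IsDomain K] {u : K[X]} (hu : u ≠ 0) (x : K)
    (k : ℕ) : (u ^ k).rootMultiplicity x = k * u.rootMultiplicity x := by
  induction k with
  | zero => simp [Polynomial.rootMultiplicity_eq_zero (by simp : ¬ (1 : K[X]).IsRoot x)]
  | succ n ih =>
    rw [pow_succ, Polynomial.rootMultiplicity_mul (mul_ne_zero (pow_ne_zero _ hu) hu), ih]
    ring

/-- The core one-variable statement over an arbitrary field of characteristic two. -/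
theorem aux_core {K : Type u} [Field K] [CharP K 2] {t : ℕ} (ht : 3 ≤ t)
    (htn : ¬ ∃ k : ℕ, t = 2 ^ k) {a : K} (ha : a ≠ 0) {g : K[X]}
    (hg : X * g = (X + 1) ^ t + X ^ t + 1) :
    Irreducible (X ^ (t - 2) + C (C a * g) : Polynomial (Polynomial K)) := by
  obtain ⟨m, s, hs_odd, hts⟩ := Nat.exists_eq_two_pow_mul_odd (show t ≠ 0 by omega)
  have hs1 : s ≠ 1 := by rintro rfl; exact htn ⟨m, by simpa using hts⟩
  have hs3 : 3 ≤ s := by obtain ⟨j, rfl⟩ := hs_odd; omega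
  set gs : K[X] := (X + 1) ^ s + X ^ s + 1 with hgs_def
  have hsK : (s : K) ≠ 0 := by
    intro h
    rw [CharP.cast_eq_zero_iff K 2 s] at h
    exact (Nat.not_even_iff_odd.mpr hs_odd) (even_iff_two_dvd.mpr h)
  have hcoeff1 : gs.coeff 1 = (s : K) := by
    rw [hgs_def]
    rw [coeff_add, coeff_add, coeff_X_add_one_pow, coeff_X_pow, coeff_one]
    simp [Nat.choose_one_right, show (1 : ℕ) ≠ s by omega]
  have hgs_ne : gs ≠ 0 := fun h => hsK (by rw [← hcoeff1, h, coeff_zero])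
  -- f = gs ^ (2 ^ m)
  have hf : (X + 1) ^ t + X ^ t + 1 = gs ^ (2 ^ m) := by
    rw [hgs_def, add_pow_char_pow, add_pow_char_pow, one_pow, ← pow_mul, ← pow_mul,
      mul_comm s (2 ^ m), ← hts]
  rw [hf] at hg
  have hg_ne : g ≠ 0 := by
    intro h
    rw [h, mul_zero] at hg
    exact pow_ne_zero _ hgs_ne hg.symm
  -- root multiplicities of gs at 0 and 1 are both 1
  have hrm : ∀ x : K, gs.IsRoot x → (derivative gs).eval x ≠ 0 →
      gs.rootMultiplicity x = 1 := by
    intro x hx hdx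
    have h1 : 0 < gs.rootMultiplicity x := (Polynomial.rootMultiplicity_pos hgs_ne).mpr hx
    have h2 : ¬ 1 < gs.rootMultiplicity x := by
      rw [Polynomial.one_lt_rootMultiplicity_iff_isRoot hgs_ne]
      rintro ⟨-, h⟩
      exact hdx h
    omega
  have hder : derivative gs = C (s : K) * (X + 1) ^ (s - 1) + C (s : K) * X ^ (s - 1) := by
    rw [hgs_def]
    simp [derivative_pow]
  have h11 : (1 : K) + 1 = 0 := by
    have := CharTwo.two_eq_zero (R := K)
    linear_combination this
  have hrm0 : gs.rootMultiplicity 0 = 1 := by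
    apply hrm
    · show gs.eval 0 = 0
      rw [hgs_def]
      simp [zero_pow (show s ≠ 0 by omega), h11]
    · rw [hder]
      simp [zero_pow (show s - 1 ≠ 0 by omega), hsK]
  have hrm1 : gs.rootMultiplicity 1 = 1 := by
    apply hrm
    · show gs.eval 1 = 0
      rw [hgs_def]
      simp [h11, zero_pow (show s ≠ 0 by omega)]
    · rw [hder]
      simp [h11, zero_pow (show s - 1 ≠ 0 by omega), hsK]
  -- root multiplicities of g
  have hXg_ne : X * g ≠ 0 := mul_ne_zero Polynomial.X_ne_zero hg_ne
  have hrmg0 : g.rootMultiplicity 0 = 2 ^ m - 1 := by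
    have := congrArg (Polynomial.rootMultiplicity (0 : K)) hg
    rw [Polynomial.rootMultiplicity_mul hXg_ne, aux_rm_pow hgs_ne, hrm0] at this
    have hX : (X : K[X]).rootMultiplicity 0 = 1 := by
      have := Polynomial.rootMultiplicity_X_sub_C_self (x := (0 : K))
      simpa using this
    omega
  have hrmg1 : g.rootMultiplicity 1 = 2 ^ m := by
    have := congrArg (Polynomial.rootMultiplicity (1 : K)) hg
    rw [Polynomial.rootMultiplicity_mul hXg_ne, aux_rm_pow hgs_ne, hrm1] at this
    have hX : (X : K[X]).rootMultiplicity 1 = 0 :=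
      Polynomial.rootMultiplicity_eq_zero (by simp [Polynomial.IsRoot])
    omega
  -- now the irreducibility
  set c : K[X] := C a * g with hc_def
  have hc_ne : c ≠ 0 := mul_ne_zero (by simpa using ha) hg_ne
  have hn2 : t - 2 ≠ 0 := by omega
  have hmon : (X ^ (t - 2) + C c : Polynomial (Polynomial K)).Monic :=
    Polynomial.monic_X_pow_add_C c hn2
  letI Fq := FractionRing (Polynomial K)
  haveI : CharP Fq 2 :=
    charP_of_injective_ringHom (IsFractionRing.injective (Polynomial K) Fq) 2
  rw [hmon.irreducible_iff_irreducible_map_fraction_map (K := Fq)]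
  rw [Polynomial.map_add, Polynomial.map_pow, Polynomial.map_X, Polynomial.map_C]
  rw [show (X ^ (t - 2) + C (algebraMap (Polynomial K) Fq c) : Fq[X])
      = X ^ (t - 2) - C (algebraMap (Polynomial K) Fq c) from (CharTwo.sub_eq_add _ _).symm]
  apply X_pow_sub_C_irreducible_char_two hn2
  intro p hp hpn b hb
  -- b is integral over K[X]
  have hb_int : IsIntegral (Polynomial K) b := by
    refine ⟨X ^ p - C c, Polynomial.monic_X_pow_sub_C c hp.ne_zero, ?_⟩
    simp [hb]
  obtain ⟨u, hu⟩ := IsIntegrallyClosed.isIntegral_iff.mp hb_int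
  have hup : u ^ p = c := by
    apply IsFractionRing.injective (Polynomial K) Fq
    rw [map_pow, hu, hb]
  have hu_ne : u ≠ 0 := by
    intro h
    rw [h, zero_pow hp.ne_zero] at hup
    exact hc_ne hup.symm
  -- p divides the root multiplicity of c at any point
  have hdvd : ∀ x : K, c.rootMultiplicity x = p * u.rootMultiplicity x := by
    intro x
    rw [← hup, aux_rm_pow hu_ne]
  have hrmc : ∀ x : K, c.rootMultiplicity x = g.rootMultiplicity x := by
    intro x
    rw [hc_def, Polynomial.rootMultiplicity_mul (mul_ne_zero (by simpa using ha) hg_ne),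
      Polynomial.rootMultiplicity_C, zero_add]
  -- at x = 1 : p ∣ 2 ^ m, hence p = 2
  have hp2 : p = 2 := by
    have h1 := (hdvd 1).symm.trans (hrmc 1)
    rw [hrmg1] at h1
    have : p ∣ 2 ^ m := ⟨_, h1.symm⟩
    exact (Nat.prime_dvd_prime_iff_eq hp Nat.prime_two).mp (hp.dvd_of_dvd_pow this)
  subst hp2
  -- t is even, hence m ≥ 1
  have hteven : 2 ∣ t := by omega
  have hm1 : 1 ≤ m := by
    by_contra h
    have hm0 : m = 0 := by omega
    rw [hm0, pow_zero, one_mul] at hts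
    rw [hts] at hteven
    exact (Nat.not_even_iff_odd.mpr hs_odd) (even_iff_two_dvd.mpr hteven)
  have h2m : 2 ∣ 2 ^ m := dvd_pow_self 2 (by omega)
  have h0 := (hdvd 0).symm.trans (hrmc 0)
  rw [hrmg0] at h0
  have h2m1 : 1 ≤ 2 ^ m := Nat.one_le_two_pow
  omega

/-- The two-variable version over any field of characteristic two. -/
theorem aux_key {K : Type u} [Field K] [CharP K 2] {t : ℕ} (ht : 3 ≤ t)
    (htn : ¬ ∃ k : ℕ, t = 2 ^ k) {a : K} (ha : a ≠ 0) {P : MvPolynomial (Fin 2) K}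
    (hP : MvPolynomial.X 0 * P = (MvPolynomial.X 0 + 1) ^ t + (MvPolynomial.X 0) ^ t + 1) :
    Irreducible (MvPolynomial.C a * P + (MvPolynomial.X 1) ^ (t - 2)) := by
  classical
  let e₀ : MvPolynomial (Fin 1) K ≃ₐ[K] Polynomial K :=
    (MvPolynomial.finSuccEquiv K 0).trans
      (Polynomial.mapAlgEquiv (MvPolynomial.isEmptyAlgEquiv K (Fin 0)))
  let e : MvPolynomial (Fin 2) K ≃ₐ[K] Polynomial (Polynomial K) :=
    (MvPolynomial.renameEquiv K (Equiv.swap 0 1)).trans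
      ((MvPolynomial.finSuccEquiv K 1).trans (Polynomial.mapAlgEquiv e₀))
  have h10 : (1 : Fin 2) = Fin.succ 0 := rfl
  have hX0 : e (MvPolynomial.X 0) = Polynomial.C Polynomial.X := by
    simp only [e, e₀, AlgEquiv.trans_apply, MvPolynomial.renameEquiv_apply,
      MvPolynomial.rename_X, Equiv.swap_apply_left, h10, MvPolynomial.finSuccEquiv_X_succ,
      Polynomial.mapAlgEquiv]
    simp [MvPolynomial.finSuccEquiv_X_zero]
  have hX1 : e (MvPolynomial.X 1) = Polynomial.X := by
    simp only [e, e₀, AlgEquiv.trans_apply, MvPolynomial.renameEquiv_apply, h10,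
      MvPolynomial.rename_X, Equiv.swap_apply_right, MvPolynomial.finSuccEquiv_X_zero,
      Polynomial.mapAlgEquiv]
    simp
  -- transport hP through e
  have hP' : Polynomial.C Polynomial.X * e P
      = Polynomial.C ((Polynomial.X + 1) ^ t + Polynomial.X ^ t + 1) := by
    have := congrArg e hP
    rw [map_mul, map_add, map_add, map_pow, map_pow, map_add, map_one, hX0] at this
    rw [this]
    simp [map_add, map_pow, map_one]
  set g : Polynomial K := (e P).coeff 0 with hg_def
  have hcoeffs : ∀ i, (e P).coeff i = if i = 0 then g else 0 := by
    intro i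
    have := congrArg (fun q => Polynomial.coeff q i) hP'
    simp only [Polynomial.coeff_C_mul, Polynomial.coeff_C] at this
    by_cases hi : i = 0
    · simp [hi, hg_def]
    · simp only [hi, if_false] at this ⊢
      exact (mul_eq_zero.mp this).resolve_left Polynomial.X_ne_zero
  have heP : e P = Polynomial.C g := by
    ext i
    rw [hcoeffs i, Polynomial.coeff_C]
  have hg : Polynomial.X * g = (Polynomial.X + 1) ^ t + Polynomial.X ^ t + 1 := by
    have := hP'
    rw [heP, ← Polynomial.C_mul] at this
    exact Polynomial.C_injective this
  have := aux_core (K := K) ht htn ha hg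
  rw [← MulEquiv.irreducible_iff (e : MvPolynomial (Fin 2) K ≃* Polynomial (Polynomial K))]
  have hmap : (e : MvPolynomial (Fin 2) K ≃* Polynomial (Polynomial K))
      (MvPolynomial.C a * P + (MvPolynomial.X 1) ^ (t - 2))
      = Polynomial.X ^ (t - 2) + Polynomial.C (Polynomial.C a * g) := by
    show e (MvPolynomial.C a * P + (MvPolynomial.X 1) ^ (t - 2)) = _
    rw [map_add, map_mul, map_pow, hX1, heP]
    have hCa : e (MvPolynomial.C a) = Polynomial.C (Polynomial.C a) := by
      rw [show (MvPolynomial.C a : MvPolynomial (Fin 2) K) = algebraMap K _ a from rfl]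
      rw [AlgEquiv.commutes]
      rfl
    rw [hCa, ← Polynomial.C_mul, add_comm]
  rw [hmap]
  exact this

end Aux

open MvPolynomial

theorem stmt_4 (r : ℕ) (hr : 0 < r) (F : Type*) [Field F] [Fintype F]
    (hcard : Fintype.card F = 2 ^ r) (t : ℕ) (ht : 3 ≤ t)
    (htn : ¬ ∃ k : ℕ, t = 2 ^ k) (a : F) (ha : a ≠ 0)
    (P : MvPolynomial (Fin 2) F)
    (hP : MvPolynomial.X 0 * P = (MvPolynomial.X 0 + 1) ^ t + (MvPolynomial.X 0) ^ t + 1) :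
    Irreducible (MvPolynomial.map (algebraMap F (AlgebraicClosure F))
      (MvPolynomial.C a * P + (MvPolynomial.X 1) ^ (t - 2))) := by
  -- F has characteristic 2
  haveI : CharP F (ringChar F) := ringChar.charP F
  obtain ⟨n, hprime, hcard'⟩ := FiniteField.card F (ringChar F)
  have hchar2 : ringChar F = 2 := by
    have hdvd : ringChar F ∣ 2 ^ r := by
      rw [← hcard, hcard']
      exact dvd_pow_self _ (by exact_mod_cast n.ne_zero)
    exact (Nat.prime_dvd_prime_iff_eq hprime Nat.prime_two).mp
      (hprime.dvd_of_dvd_pow hdvd)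
  haveI : CharP F 2 := hchar2 ▸ ringChar.charP F
  set L := AlgebraicClosure F
  haveI : CharP L 2 := charP_of_injective_algebraMap (algebraMap F L).injective 2
  set φ := algebraMap F L
  have ha' : φ a ≠ 0 := by
    simpa using (map_ne_zero_iff φ (algebraMap F L).injective).mpr ha
  have hP' : MvPolynomial.X 0 * (MvPolynomial.map φ P)
      = (MvPolynomial.X 0 + 1) ^ t + (MvPolynomial.X 0) ^ t + 1 := by
    have := congrArg (MvPolynomial.map φ) hP
    simpa [map_mul, map_add, map_pow, map_one, MvPolynomial.map_X] using this
  have := aux_key (K := L) ht htn ha' hP'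
  have hmapeq : MvPolynomial.map φ (MvPolynomial.C a * P + (MvPolynomial.X 1) ^ (t - 2))
      = MvPolynomial.C (φ a) * (MvPolynomial.map φ P) + (MvPolynomial.X 1) ^ (t - 2) := by
    simp [map_mul, map_add, map_pow, MvPolynomial.map_C, MvPolynomial.map_X]
  rw [hmapeq]
  exact this
end

section
/- Let t be a positive integer which is not a power of 2, and write t = 2^m · o with o odd (so o ≥ 3). Then in F_2[X], the multiplicity of 0 as a root of the polynomial ((X+1)^t + X^t + 1)/X equals 2^m − 1, and the multiplicity of 1 as a root of this polynomial equals 2^m. -/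
open Polynomial

lemma aux_rootMultiplicity_pow {K : Type*} [Field K] (p : Polynomial K) (hp : p ≠ 0)
    (a : K) (n : ℕ) : (p ^ n).rootMultiplicity a = n * p.rootMultiplicity a := by
  induction n with
  | zero => simp
  | succ k ih =>
    rw [pow_succ, Polynomial.rootMultiplicity_mul (mul_ne_zero (pow_ne_zero _ hp) hp), ih]
    ring

theorem stmt_6 (t : ℕ) (ht : 0 < t) (htn : ¬ ∃ k : ℕ, t = 2 ^ k)
    (m o : ℕ) (ho : Odd o) (hto : t = 2 ^ m * o)
    (Q : Polynomial (ZMod 2))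
    (hQ : Polynomial.X * Q = (Polynomial.X + 1) ^ t + Polynomial.X ^ t + 1) :
    Q.rootMultiplicity 0 = 2 ^ m - 1 ∧ Q.rootMultiplicity 1 = 2 ^ m := by
  -- o ≥ 3
  have ho1 : o ≠ 1 := by
    rintro rfl
    exact htn ⟨m, by simpa using hto⟩
  have ho3 : 3 ≤ o := by
    rcases ho with ⟨k, rfl⟩
    omega
  set F : Polynomial (ZMod 2) := (X + 1) ^ o + X ^ o + 1 with hF
  have hoz : (o : ZMod 2) = 1 := by
    rcases ho with ⟨k, rfl⟩
    push_cast
    rw [show (2 : ZMod 2) = 0 from by decide]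
    ring
  -- derivative of F
  have hderiv : derivative F = (X + 1) ^ (o - 1) + X ^ (o - 1) := by
    have ho' : o - 1 + 1 = o := by omega
    rw [hF]
    simp [Polynomial.derivative_pow, hoz, ho']
  have hd0 : (derivative F).eval 0 = 1 := by
    rw [hderiv]
    simp [zero_pow (show o - 1 ≠ 0 by omega)]
  have hd1 : (derivative F).eval 1 = 1 := by
    rw [hderiv]
    have : (1 : ZMod 2) + 1 = 0 := by decide
    simp [this, zero_pow (show o - 1 ≠ 0 by omega)]
  have hFne : F ≠ 0 := by
    intro h
    rw [h] at hd0
    simp at hd0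
  have he0 : F.eval 0 = 0 := by
    rw [hF]
    simp [zero_pow (show o ≠ 0 by omega)]
    decide
  have he1 : F.eval 1 = 0 := by
    have : (1 : ZMod 2) + 1 = 0 := by decide
    rw [hF]
    simp [this, zero_pow (show o ≠ 0 by omega)]
  have hrm : ∀ a : ZMod 2, F.eval a = 0 → (derivative F).eval a = 1 →
      F.rootMultiplicity a = 1 := by
    intro a hea hda
    have h1 : 1 ≤ F.rootMultiplicity a :=
      (Polynomial.rootMultiplicity_pos hFne).2 hea
    have h2 : ¬ 1 < F.rootMultiplicity a := by
      rw [Polynomial.one_lt_rootMultiplicity_iff_isRoot hFne]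
      rintro ⟨-, h⟩
      rw [Polynomial.IsRoot, hda] at h
      exact one_ne_zero h
    omega
  -- X * Q = F ^ 2^m
  have hpow : F ^ 2 ^ m = (X + 1) ^ t + X ^ t + 1 := by
    have c2 : CharP (Polynomial (ZMod 2)) 2 := inferInstance
    rw [hF, add_pow_char_pow, add_pow_char_pow, one_pow, ← pow_mul, ← pow_mul,
      mul_comm o (2 ^ m), ← hto]
  have hXQ : X * Q = F ^ 2 ^ m := by rw [hQ, hpow]
  have hQne : Q ≠ 0 := by
    intro h
    rw [h, mul_zero] at hXQ
    exact pow_ne_zero _ hFne hXQ.symm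
  have hXQne : (X : Polynomial (ZMod 2)) * Q ≠ 0 :=
    mul_ne_zero Polynomial.X_ne_zero hQne
  have key : ∀ a : ZMod 2, (X * Q).rootMultiplicity a = 2 ^ m * F.rootMultiplicity a := by
    intro a
    rw [hXQ, aux_rootMultiplicity_pow _ hFne]
  constructor
  · have h0 := key 0
    rw [Polynomial.rootMultiplicity_mul hXQne, hrm 0 he0 hd0, mul_one] at h0
    have hX : (X : Polynomial (ZMod 2)).rootMultiplicity 0 = 1 := by
      simpa using Polynomial.rootMultiplicity_X_sub_C_self (x := (0 : ZMod 2))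
    omega
  · have h1 := key 1
    rw [Polynomial.rootMultiplicity_mul hXQne, hrm 1 he1 hd1, mul_one] at h1
    have hX : (X : Polynomial (ZMod 2)).rootMultiplicity 1 = 0 := by
      apply Polynomial.rootMultiplicity_eq_zero
      simp [Polynomial.IsRoot]
    omega
end

section
/- Let t be a positive integer which is not a power of 2, and let ℓ be any prime number dividing t − 2. Then the polynomial ((X+1)^t + X^t + 1)/X ∈ F_2[X] is not an ℓ-th power in K[X], where K is an algebraic closure of F_2. -/
open Polynomial

lemma aux_rootMult_pow {K : Type*} [CommRing K] [IsDomain K] {p : K[X]} (hp : p ≠ 0) (a : K) (n : ℕ) :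
    rootMultiplicity a (p ^ n) = n * rootMultiplicity a p := by
  induction n with
  | zero => simp
  | succ n ih =>
    rw [pow_succ, rootMultiplicity_mul (mul_ne_zero (pow_ne_zero n hp) hp), ih]; ring

set_option maxHeartbeats 1000000 in
theorem stmt_7 (t : ℕ) (ht : 0 < t) (htn : ¬ ∃ k : ℕ, t = 2 ^ k)
    (ℓ : ℕ) (hℓ : ℓ.Prime) (hdvd : ℓ ∣ t - 2)
    (Q : Polynomial (ZMod 2))
    (hQ : Polynomial.X * Q = (Polynomial.X + 1) ^ t + Polynomial.X ^ t + 1) :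
    ¬ ∃ R : Polynomial (AlgebraicClosure (ZMod 2)),
        Q.map (algebraMap (ZMod 2) (AlgebraicClosure (ZMod 2))) = R ^ ℓ := by
  obtain ⟨v, m, hm2, htm⟩ := Nat.exists_eq_pow_mul_and_not_dvd ht.ne' 2 (by norm_num)
  have hm1 : m ≠ 1 := by rintro rfl; exact htn ⟨v, by simpa using htm⟩
  have hm0 : m ≠ 0 := by rintro rfl; simp at htm; omega
  have hm3 : 3 ≤ m := by omega
  set F := ZMod 2
  set Pm : F[X] := (X+1)^m + X^m + 1 with hPm
  have hchar : (2 : F) = 0 := by decide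
  have hodd : (m : F) = 1 := by
    have : ¬ (2 ∣ m) := hm2
    rcases Nat.even_or_odd m with he | ho
    · exact absurd he.two_dvd this
    · obtain ⟨k, rfl⟩ := ho
      push_cast
      rw [Nat.cast_mul, Nat.cast_ofNat, hchar]; ring
  -- derivative of Pm
  have hder : derivative Pm = C (m : F) * (X+1)^(m-1) + C (m : F) * X^(m-1) := by
    rw [hPm]
    simp [derivative_pow, C_eq_natCast]
  have hd1 : eval 1 (derivative Pm) = 1 := by
    rw [hder, eval_add, eval_mul, eval_mul, eval_C, eval_pow, eval_pow, eval_add,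
      eval_X, eval_one, hodd, show (1 + 1 : F) = 0 from by decide,
      zero_pow (show m - 1 ≠ 0 by omega), one_pow]
    ring
  have hd0 : eval 0 (derivative Pm) = 1 := by
    rw [hder, eval_add, eval_mul, eval_mul, eval_C, eval_pow, eval_pow, eval_add,
      eval_X, eval_one, hodd, zero_add, one_pow,
      zero_pow (show m - 1 ≠ 0 by omega)]
    ring
  have hPm0 : Pm ≠ 0 := by
    intro h; rw [h] at hd1; simp at hd1
  have hroot1 : IsRoot Pm 1 := by
    simp only [IsRoot, hPm, eval_add, eval_pow, eval_one, eval_X]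
    rw [show (1 + 1 : F) = 0 by decide, zero_pow hm0, one_pow]
    decide
  have hroot0 : IsRoot Pm 0 := by
    simp only [IsRoot, hPm, eval_add, eval_pow, eval_one, eval_X]
    rw [zero_pow hm0, zero_add, one_pow]
    decide
  have hrm1 : rootMultiplicity 1 Pm = 1 := by
    have h1 : 0 < rootMultiplicity 1 Pm := (rootMultiplicity_pos hPm0).mpr hroot1
    have h2 : ¬ 1 < rootMultiplicity 1 Pm := by
      rw [one_lt_rootMultiplicity_iff_isRoot hPm0]
      rintro ⟨-, h⟩
      rw [IsRoot, hd1] at h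
      exact one_ne_zero h
    omega
  have hrm0 : rootMultiplicity 0 Pm = 1 := by
    have h1 : 0 < rootMultiplicity 0 Pm := (rootMultiplicity_pos hPm0).mpr hroot0
    have h2 : ¬ 1 < rootMultiplicity 0 Pm := by
      rw [one_lt_rootMultiplicity_iff_isRoot hPm0]
      rintro ⟨-, h⟩
      rw [IsRoot, hd0] at h
      exact one_ne_zero h
    omega
  -- factorization
  have hfact : (X + 1 : F[X]) ^ t + X ^ t + 1 = Pm ^ (2 ^ v) := by
    have hc : CharP F[X] 2 := inferInstance
    rw [hPm, add_pow_char_pow, add_pow_char_pow, one_pow, htm,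
      mul_comm (2^v) m, pow_mul, pow_mul]
  rw [hfact] at hQ
  have hQ0 : Q ≠ 0 := by
    rintro rfl
    rw [mul_zero] at hQ
    exact pow_ne_zero _ hPm0 hQ.symm
  have hXQ : (X : F[X]) * Q ≠ 0 := mul_ne_zero X_ne_zero hQ0
  have hQ1 : rootMultiplicity 1 Q = 2 ^ v := by
    have := rootMultiplicity_mul (x := (1 : F)) hXQ
    rw [hQ, aux_rootMult_pow hPm0, hrm1,
      rootMultiplicity_eq_zero (by simp [IsRoot])] at this
    omega
  have hQ0m : rootMultiplicity 0 Q = 2 ^ v - 1 := by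
    have := rootMultiplicity_mul (x := (0 : F)) hXQ
    have hX : rootMultiplicity (0 : F) X = 1 := by
      have : (X : F[X]) = X - C 0 := by simp
      rw [this, rootMultiplicity_X_sub_C_self]
    rw [hQ, aux_rootMult_pow hPm0, hrm0, hX] at this
    have hv : 0 < 2 ^ v := Nat.pow_pos (by norm_num : 0 < 2)
    omega
  have hv1 : 1 ≤ 2 ^ v := Nat.pow_pos (by norm_num : 0 < 2)
  rintro ⟨R, hR⟩
  set f := algebraMap F (AlgebraicClosure F)
  have hf : Function.Injective f := f.injective
  have hRm1 : rootMultiplicity (f 1) (R ^ ℓ) = 2 ^ v := by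
    have h := eq_rootMultiplicity_map (p := Q) hf (1 : F)
    rw [hQ1, hR] at h
    exact h.symm
  have hRm0 : rootMultiplicity (f 0) (R ^ ℓ) = 2 ^ v - 1 := by
    have h := eq_rootMultiplicity_map (p := Q) hf (0 : F)
    rw [hQ0m, hR] at h
    exact h.symm
  have hR0 : R ≠ 0 := by
    rintro rfl
    rw [zero_pow hℓ.ne_zero] at hR
    exact hQ0 (by simpa [Polynomial.map_eq_zero_iff hf] using hR)
  rw [aux_rootMult_pow hR0] at hRm1 hRm0
  rcases hℓ.eq_two_or_odd' with rfl | hlodd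
  · -- ℓ = 2 : t even so v ≥ 1, 2^v - 1 odd
    have ht3 : 3 ≤ t := by
      have : m ≤ 2 ^ v * m := Nat.le_mul_of_pos_left m (Nat.pow_pos (by norm_num : 0 < 2))
      omega
    have h2t : 2 ∣ t := by omega
    have hv : v ≠ 0 := by
      rintro rfl
      rw [pow_zero, one_mul] at htm
      exact hm2 (htm ▸ h2t)
    have h2v : 2 ∣ 2 ^ v := dvd_pow_self 2 hv
    omega
  · -- ℓ odd : ℓ ∣ 2^v impossible
    have hl2 : ℓ ∣ 2 ^ v := ⟨_, hRm1.symm⟩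
    have h2 := (Nat.Prime.dvd_of_dvd_pow hℓ hl2)
    have : ℓ = 2 := (Nat.prime_dvd_prime_iff_eq hℓ Nat.prime_two).mp h2
    rw [this, Nat.odd_iff] at hlodd
    simp at hlodd
end

section
/- Let q = 2^r, let t ≥ 3 be an integer which is not a power of 2, and let a be a nonzero element of F_q. Suppose the function c ↦ a·c^t is planar on F_q. Let H(X,Y) = a·((X+1)^t + X^t + 1)/X + Y^{t−2} ∈ F_q[X,Y]. Then every pair (c,b) ∈ F_q × F_q with H(c,b) = 0 satisfies c = 0 or b = 0, and consequently the number of zeros of H in F_q × F_q is at most 2(t−2). -/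
/-- A function `f : F → F` on a field of characteristic 2 is *planar* if for every
nonzero `b`, the map `c ↦ f(c+b) + f(c) + b*c` is a bijection. -/
def IsPlanar {F : Type*} [Field F] (f : F → F) : Prop :=
  ∀ b : F, b ≠ 0 → Function.Bijective (fun c : F => f (c + b) + f c + b * c)

lemma exists_odd_choose : ∀ t : ℕ, 2 ≤ t → (¬ ∃ k : ℕ, t = 2 ^ k) →
    ∃ k : ℕ, 0 < k ∧ k < t ∧ Nat.choose t k % 2 = 1 := by
  intro t
  induction t using Nat.strong_induction_on with
  | _ t ih =>
    intro ht htn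
    rcases Nat.even_or_odd t with he | ho
    · obtain ⟨s, hs⟩ := he
      have hs2 : t = 2 * s := by omega
      have hsge : 2 ≤ s := by
        rcases Nat.lt_or_ge s 2 with h | h
        · exfalso
          have : s = 1 := by omega
          exact htn ⟨1, by omega⟩
        · exact h
      have hsn : ¬ ∃ k : ℕ, s = 2 ^ k := by
        rintro ⟨k, hk⟩
        exact htn ⟨k + 1, by rw [hs2, hk, pow_succ]; ring⟩
      obtain ⟨k, hk0, hks, hkodd⟩ := ih s (by omega) (by omega) hsn
      refine ⟨2 * k, by omega, by omega, ?_⟩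
      haveI : Fact (Nat.Prime 2) := ⟨Nat.prime_two⟩
      have hl := Choose.choose_modEq_choose_mod_mul_choose_div_nat (p := 2) (n := t) (k := 2 * k)
      rw [Nat.ModEq] at hl
      have h1 : t % 2 = 0 := by omega
      have h2 : (2 * k) % 2 = 0 := by omega
      have h3 : t / 2 = s := by omega
      have h4 : (2 * k) / 2 = k := by omega
      rw [h1, h2, h3, h4, Nat.choose_self, one_mul] at hl
      omega
    · exact ⟨1, one_pos, by omega, by rw [Nat.choose_one_right]; exact Nat.odd_iff.mp ho⟩

theorem stmt_9 (r : ℕ) (F : Type*) [Field F] [Fintype F] [DecidableEq F]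
    (hcard : Fintype.card F = 2 ^ r) (t : ℕ) (ht : 3 ≤ t)
    (htn : ¬ ∃ k : ℕ, t = 2 ^ k) (a : F) (ha : a ≠ 0)
    (hplanar : IsPlanar (fun c : F => a * c ^ t))
    (P : MvPolynomial (Fin 2) F)
    (hP : MvPolynomial.X 0 * P = (MvPolynomial.X 0 + 1) ^ t + (MvPolynomial.X 0) ^ t + 1)
    (H : MvPolynomial (Fin 2) F)
    (hH : H = MvPolynomial.C a * P + (MvPolynomial.X 1) ^ (t - 2)) :
    (∀ c b : F, MvPolynomial.eval ![c, b] H = 0 → c = 0 ∨ b = 0) ∧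
    (Finset.univ.filter
        (fun cb : F × F => MvPolynomial.eval ![cb.1, cb.2] H = 0)).card ≤ 2 * (t - 2) := by
  classical
  -- characteristic 2
  have hq0 : ((Fintype.card F : ℕ) : F) = 0 := FiniteField.cast_card_eq_zero F
  have h2 : (2 : F) = 0 := by
    rw [hcard] at hq0
    push_cast at hq0
    have hr : r ≠ 0 := by
      rintro rfl
      have h1 := Fintype.one_lt_card (α := F)
      rw [hcard, pow_zero] at h1
      omega
    exact pow_eq_zero_iff hr |>.mp hq0
  have hx2 : ∀ x : F, x + x = 0 := fun x => by
    rw [← two_mul, h2, zero_mul]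
  -- univariate polynomial G and its quotient p
  set G : Polynomial F := (Polynomial.X + 1) ^ t + Polynomial.X ^ t + 1 with hG
  have htne : t ≠ 0 := by omega
  have hGc0 : G.coeff 0 = 0 := by
    have : G.coeff 0 = (Nat.choose t 0 : F) + 0 + 1 := by
      simp [hG, Polynomial.coeff_X_add_one_pow, Polynomial.coeff_X_pow, htne]
      all_goals omega
    rw [this, Nat.choose_zero_right]
    push_cast
    linear_combination h2
  obtain ⟨p, hp⟩ : Polynomial.X ∣ G := Polynomial.X_dvd_iff.mpr hGc0
  -- G is nonzero
  obtain ⟨k, hk0, hkt, hkodd⟩ := exists_odd_choose t (by omega) htn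
  have hGk : G.coeff k = 1 := by
    have h1 : G.coeff k = (Nat.choose t k : F) + 0 + 0 := by
      simp [hG, Polynomial.coeff_X_add_one_pow, Polynomial.coeff_X_pow,
        (show t ≠ k by omega), Polynomial.coeff_one, (show k ≠ 0 by omega)]
      all_goals omega
    obtain ⟨m, hm⟩ : ∃ m, Nat.choose t k = 2 * m + 1 := ⟨Nat.choose t k / 2, by omega⟩
    rw [h1, hm]
    push_cast
    linear_combination (m : F) * h2
  have hGne : G ≠ 0 := by
    intro h
    rw [h] at hGk
    simp at hGk
  have hpne : p ≠ 0 := by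
    rintro rfl
    rw [mul_zero] at hp
    exact hGne hp
  -- degree bounds
  have hGdegle : G.natDegree ≤ t := by
    have h1 : ((Polynomial.X + 1 : Polynomial F)).natDegree ≤ 1 := by
      rw [← Polynomial.C_1]
      exact le_of_eq (Polynomial.natDegree_X_add_C 1)
    apply le_trans (Polynomial.natDegree_add_le _ _)
    rw [max_le_iff]
    refine ⟨le_trans (Polynomial.natDegree_add_le _ _) ?_, by simp⟩
    rw [max_le_iff]
    refine ⟨le_trans Polynomial.natDegree_pow_le ?_, by simp [Polynomial.natDegree_X_pow]⟩
    calc t * (Polynomial.X + 1 : Polynomial F).natDegree ≤ t * 1 := Nat.mul_le_mul_left t h1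
      _ = t := Nat.mul_one t
  have hGct : G.coeff t = 0 := by
    have : G.coeff t = (Nat.choose t t : F) + 1 + 0 := by
      simp [hG, Polynomial.coeff_X_add_one_pow, Polynomial.coeff_X_pow,
        Polynomial.coeff_one, htne]
      all_goals omega
    rw [this, Nat.choose_self]
    push_cast
    linear_combination h2
  have hGdeg : G.natDegree ≤ t - 1 := by
    have hne : G.natDegree ≠ t := by
      intro h
      have := Polynomial.leadingCoeff_ne_zero.mpr hGne
      rw [Polynomial.leadingCoeff, h, hGct] at this
      exact this rfl
    omega
  have hpdeg : p.natDegree ≤ t - 2 := by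
    have h1 : G.natDegree = 1 + p.natDegree := by
      rw [hp, Polynomial.natDegree_mul Polynomial.X_ne_zero hpne, Polynomial.natDegree_X]
    omega
  -- identify P
  have haevalG : Polynomial.aeval (MvPolynomial.X 0 : MvPolynomial (Fin 2) F) G
      = (MvPolynomial.X 0 + 1) ^ t + (MvPolynomial.X 0) ^ t + 1 := by
    simp [hG]
  have hPa : P = Polynomial.aeval (MvPolynomial.X 0 : MvPolynomial (Fin 2) F) p := by
    apply mul_left_cancel₀ (MvPolynomial.X_ne_zero (R := F) 0)
    rw [hP, ← haevalG, hp]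
    rw [map_mul, Polynomial.aeval_X]
  have hPeval : ∀ c b : F, MvPolynomial.eval ![c, b] P = p.eval c := by
    intro c b
    rw [hPa, Polynomial.aeval_def, Polynomial.hom_eval₂]
    simp only [MvPolynomial.eval_X]
    have : (MvPolynomial.eval ![c, b]).comp (algebraMap F (MvPolynomial (Fin 2) F))
        = RingHom.id F := by
      ext x
      simp [MvPolynomial.algebraMap_eq]
    rw [this]
    have hc0 : (![c, b] : Fin 2 → F) 0 = c := rfl
    rw [hc0]
    rfl
  have hkeyP : ∀ c : F, c * p.eval c = (c + 1) ^ t + c ^ t + 1 := by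
    intro c
    have := congrArg (Polynomial.eval c) hp
    simpa [hG] using this.symm
  have hHeval : ∀ c b : F, MvPolynomial.eval ![c, b] H = a * p.eval c + b ^ (t - 2) := by
    intro c b
    rw [hH]
    simp [hPeval c b]
  -- Part 1
  have part1 : ∀ c b : F, MvPolynomial.eval ![c, b] H = 0 → c = 0 ∨ b = 0 := by
    intro c b h0
    by_contra hcon
    push_neg at hcon
    obtain ⟨hc, hb⟩ := hcon
    rw [hHeval] at h0
    have hab : a * p.eval c = b ^ (t - 2) := by
      linear_combination h0 - b ^ (t - 2) * h2
    set β := b⁻¹ with hβdef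
    have hβ : β ≠ 0 := inv_ne_zero hb
    have hbβ : β * b = 1 := inv_mul_cancel₀ hb
    have hββ : β ^ (t - 2) * b ^ (t - 2) = 1 := by
      rw [← mul_pow, hbβ, one_pow]
    have hβt : β ^ t = β ^ 2 * β ^ (t - 2) := by
      rw [← pow_add]
      congr 1
      omega
    have h3 : (c + 1) ^ t + c ^ t = c * p.eval c + 1 := by
      linear_combination (-1 : F) * hkeyP c - h2
    have key : a * ((β * c) + β) ^ t + a * (β * c) ^ t + β * (β * c)
        = a * ((0 : F) + β) ^ t + a * (0 : F) ^ t + β * 0 := by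
      rw [zero_add, zero_pow htne, mul_zero, mul_zero, add_zero, add_zero]
      have e1 : (β * c + β) = β * (c + 1) := by ring
      rw [e1, mul_pow, mul_pow]
      calc a * (β ^ t * (c + 1) ^ t) + a * (β ^ t * c ^ t) + β * (β * c)
          = a * β ^ t * ((c + 1) ^ t + c ^ t) + β ^ 2 * c := by ring
        _ = a * β ^ t * (c * p.eval c + 1) + β ^ 2 * c := by rw [h3]
        _ = (a * p.eval c) * (β ^ t * c) + a * β ^ t + β ^ 2 * c := by ring
        _ = b ^ (t - 2) * (β ^ t * c) + a * β ^ t + β ^ 2 * c := by rw [hab]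
        _ = (β ^ (t - 2) * b ^ (t - 2)) * (β ^ 2 * c) + a * β ^ t + β ^ 2 * c := by
            rw [hβt]; ring
        _ = β ^ 2 * c + a * β ^ t + β ^ 2 * c := by rw [hββ, one_mul]
        _ = a * β ^ t + (β ^ 2 * c + β ^ 2 * c) := by ring
        _ = a * β ^ t := by rw [hx2, add_zero]
    have hinj := (hplanar β hβ).injective
    have h0' : β * c = 0 := hinj key
    rcases mul_eq_zero.mp h0' with h | h
    · exact hβ h
    · exact hc h
  refine ⟨part1, ?_⟩
  -- Part 2 : counting
  set q1 : Polynomial F := Polynomial.X ^ (t - 2) + Polynomial.C (a * p.eval 0) with hq1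
  have hq1deg : q1.natDegree = t - 2 := Polynomial.natDegree_X_pow_add_C
  have hq1ne : q1 ≠ 0 := by
    intro h
    rw [h, Polynomial.natDegree_zero] at hq1deg
    omega
  set A : Finset (F × F) := q1.roots.toFinset.image (fun b => ((0 : F), b)) with hA
  set B : Finset (F × F) := p.roots.toFinset.image (fun c => (c, (0 : F))) with hB
  have hsub : (Finset.univ.filter
      (fun cb : F × F => MvPolynomial.eval ![cb.1, cb.2] H = 0)) ⊆ A ∪ B := by
    intro cb hcb
    rw [Finset.mem_filter] at hcb
    obtain ⟨-, h0⟩ := hcb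
    obtain ⟨c, b⟩ := cb
    rcases part1 c b h0 with rfl | rfl
    · -- c = 0
      rw [hHeval] at h0
      apply Finset.mem_union_left
      rw [hA, Finset.mem_image]
      refine ⟨b, ?_, rfl⟩
      rw [Multiset.mem_toFinset, Polynomial.mem_roots hq1ne]
      show q1.eval b = 0
      rw [hq1]
      simp only [Polynomial.eval_add, Polynomial.eval_pow, Polynomial.eval_X,
        Polynomial.eval_C]
      linear_combination h0
    · -- b = 0
      rw [hHeval] at h0
      apply Finset.mem_union_right
      rw [hB, Finset.mem_image]
      refine ⟨c, ?_, rfl⟩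
      rw [Multiset.mem_toFinset, Polynomial.mem_roots hpne]
      show p.eval c = 0
      rw [zero_pow (show t - 2 ≠ 0 by omega), add_zero] at h0
      rcases mul_eq_zero.mp h0 with h | h
      · exact absurd h ha
      · exact h
  apply le_trans (Finset.card_le_card hsub)
  apply le_trans (Finset.card_union_le A B)
  have hAcard : A.card ≤ t - 2 := by
    apply le_trans (Finset.card_image_le)
    apply le_trans (Multiset.toFinset_card_le _)
    rw [← hq1deg]
    exact Polynomial.card_roots' q1
  have hBcard : B.card ≤ t - 2 := by
    apply le_trans (Finset.card_image_le)
    apply le_trans (Multiset.toFinset_card_le _)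
    exact le_trans (Polynomial.card_roots' p) hpdeg
  omega
end

section
/- Let t be a positive integer which is not a power of 2, with binary expansion t = 2^{a_1} + 2^{a_2} + ... + 2^{a_k} where k ≥ 2 and 0 ≤ a_1 < a_2 < ... < a_k. Then the polynomial (X+1)^t + X^t ∈ F_2[X] has degree e = 2^{a_2} + 2^{a_3} + ... + 2^{a_k} = t − 2^{a_1}, and e ≥ 2. -/
open Polynomial

lemma odd_case (s : ℕ) (hs : Odd s) (hs1 : 1 ≤ s) :
    ((X + 1) ^ s + X ^ s : Polynomial (ZMod 2)).natDegree = s - 1 := by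
  set P : Polynomial (ZMod 2) := (X + 1) ^ s + X ^ s with hP
  have hcoeff : ∀ i, P.coeff i = (s.choose i : ZMod 2) + (X ^ s : Polynomial (ZMod 2)).coeff i := by
    intro i
    simp [hP, coeff_X_add_one_pow]
  have hle : P.natDegree ≤ s - 1 := by
    rw [natDegree_le_iff_coeff_eq_zero]
    intro m hm
    rcases lt_trichotomy m s with h | h | h
    · omega
    · subst h
      rw [hcoeff]
      rw [Nat.choose_self, coeff_X_pow, if_pos rfl]
      decide
    · rw [hcoeff, Nat.choose_eq_zero_of_lt h, coeff_X_pow, if_neg (by omega)]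
      simp
  have hne : P.coeff (s - 1) ≠ 0 := by
    rw [hcoeff, coeff_X_pow, if_neg (by omega), add_zero]
    have hch : s.choose (s - 1) = s := by
      rw [Nat.choose_symm (by omega : 1 ≤ s), Nat.choose_one_right]
    rw [hch]
    have h2 : s % 2 = 1 := Nat.odd_iff.mp hs
    have : (s : ZMod 2) = ((s % 2 : ℕ) : ZMod 2) := (ZMod.natCast_mod s 2).symm
    rw [this, h2]
    decide
  exact le_antisymm hle (le_natDegree_of_ne_zero hne)

theorem stmt_12 (t : ℕ) (ht : 0 < t) (htn : ¬ ∃ j : ℕ, t = 2 ^ j)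
    (k : ℕ) (hk : 2 ≤ k) (a : Fin k → ℕ) (ha : StrictMono a)
    (hta : t = ∑ i : Fin k, 2 ^ (a i)) :
    ((Polynomial.X + 1) ^ t + Polynomial.X ^ t : Polynomial (ZMod 2)).natDegree =
        t - 2 ^ (a ⟨0, by omega⟩) ∧
    2 ≤ t - 2 ^ (a ⟨0, by omega⟩) := by
  set i0 : Fin k := ⟨0, by omega⟩ with hi0
  set m := a i0 with hm
  set s : ℕ := ∑ i : Fin k, 2 ^ (a i - m) with hs
  have hlt : ∀ i : Fin k, i ≠ i0 → m < a i := by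
    intro i hne
    refine ha ?_
    rw [Fin.lt_def]
    have : i.val ≠ 0 := fun h => hne (Fin.ext (by simp [hi0, h]))
    simp [hi0]; omega
  have hle : ∀ i : Fin k, m ≤ a i := by
    intro i
    by_cases h : i = i0
    · subst h; rfl
    · exact (hlt i h).le
  have hts : t = 2 ^ m * s := by
    rw [hta, hs, Finset.mul_sum]
    refine Finset.sum_congr rfl fun i _ => ?_
    rw [← pow_add]
    congr 1
    have := hle i; omega
  have heven : 2 ∣ ∑ i ∈ Finset.univ.erase i0, 2 ^ (a i - m) := by
    refine Finset.dvd_sum fun i hi => ?_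
    have := hlt i (Finset.ne_of_mem_erase hi)
    exact dvd_pow_self 2 (by omega)
  have hs1 : s = 1 + ∑ i ∈ Finset.univ.erase i0, 2 ^ (a i - m) := by
    rw [hs, ← Finset.add_sum_erase _ _ (Finset.mem_univ i0)]
    simp [hm]
  have hodd : Odd s := by
    rw [Nat.odd_iff]
    obtain ⟨c, hc⟩ := heven
    omega
  have hs3 : 3 ≤ s := by
    have hsne1 : s ≠ 1 := by
      intro h
      exact htn ⟨m, by rw [hts, h, mul_one]⟩
    obtain ⟨c, hc⟩ := hodd
    omega
  have hpoly : ((X + 1) ^ t + X ^ t : Polynomial (ZMod 2)) =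
      (((X + 1) ^ s + X ^ s : Polynomial (ZMod 2))) ^ (2 ^ m) := by
    rw [add_pow_char_pow, ← pow_mul, ← pow_mul, mul_comm s, ← hts]
  have hd := odd_case s hodd (by omega)
  have hPne : ((X + 1) ^ s + X ^ s : Polynomial (ZMod 2)) ≠ 0 := by
    intro h
    rw [h, natDegree_zero] at hd
    omega
  have key : 2 ^ m * s - 2 ^ m = 2 ^ m * (s - 1) := by
    rw [Nat.mul_sub, mul_one]
  have hge : 2 ≤ 2 ^ m * (s - 1) := by
    have h1 : s - 1 ≤ 2 ^ m * (s - 1) :=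
      Nat.le_mul_of_pos_left _ (Nat.pos_of_ne_zero (pow_ne_zero m (by norm_num)))
    omega
  constructor
  · rw [hpoly, natDegree_pow, hd, hts, key]
  · rw [hts, key]; exact hge
end

section
/- Let q = 2^r, let t ≥ 3 be an integer which is not a power of 2, and let a be a nonzero element of F_q. Suppose the function c ↦ a·c^t is planar on F_q. Let H̄(X,Y) = ((X+1)^t + X^t + (Y+1)^t + Y^t)/(X+Y) ∈ F_q[X,Y]. Then for every d of the form d = a^{−1}·b^{2−t} with b a nonzero element of F_q and with d ∉ {0, 1}, the number of zeros of H̄(X,Y) + d in F_q × F_q is at most t − 2. -/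
theorem stmt_14 (r : ℕ) (F : Type*) [Field F] [Fintype F] [DecidableEq F]
    (hcard : Fintype.card F = 2 ^ r) (t : ℕ) (ht : 3 ≤ t)
    (htn : ¬ ∃ k : ℕ, t = 2 ^ k) (a : F) (ha : a ≠ 0)
    (hplanar : IsPlanar (fun c : F => a * c ^ t))
    (Hbar : MvPolynomial (Fin 2) F)
    (hHbar : (MvPolynomial.X 0 + MvPolynomial.X 1) * Hbar =
        (MvPolynomial.X 0 + 1) ^ t + (MvPolynomial.X 0) ^ t +
        (MvPolynomial.X 1 + 1) ^ t + (MvPolynomial.X 1) ^ t) :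
    ∀ b : F, b ≠ 0 → ∀ d : F, d = a⁻¹ * b ^ ((2 : ℤ) - t) → d ≠ 0 → d ≠ 1 →
      (Finset.univ.filter
          (fun xy : F × F =>
            MvPolynomial.eval ![xy.1, xy.2] (Hbar + MvPolynomial.C d) = 0)).card ≤ t - 2 := by
  intro b hb d hd hd0 hd1
  classical
  -- characteristic 2
  haveI hchar : CharP F 2 := by
    obtain ⟨n, hp, hc⟩ := FiniteField.card F (ringChar F)
    have hdvd : ringChar F ∣ 2 ^ r := by
      rw [← hcard, hc]
      exact dvd_pow_self _ (by positivity)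
    have h2' : ringChar F = 2 :=
      (Nat.prime_dvd_prime_iff_eq hp Nat.prime_two).mp (hp.dvd_of_dvd_pow hdvd)
    rw [← h2']
    exact ringChar.charP F
  have htwo : (2 : F) = 0 := CharTwo.two_eq_zero
  -- the auxiliary function g
  set g : F → F := fun u => (u + 1) ^ t + u ^ t + d * u with hgdef
  have hbt : (b : F) ^ t ≠ 0 := pow_ne_zero _ hb
  have hdb : d = a⁻¹ * (b ^ 2 * (b ^ t)⁻¹) := by
    rw [hd, zpow_sub₀ hb]
    norm_num [zpow_natCast, div_eq_mul_inv]
  have hGinj : Function.Injective fun c : F => a * (c + b) ^ t + a * c ^ t + b * c :=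
    (hplanar b hb).injective
  have key : ∀ u : F,
      g u = a⁻¹ * (b ^ t)⁻¹ * (a * (b * u + b) ^ t + a * (b * u) ^ t + b * (b * u)) := by
    intro u
    have hbe : b * u + b = b * (u + 1) := by ring
    rw [hbe, mul_pow, mul_pow, hgdef]
    simp only
    rw [hdb]
    field_simp
  have hginj : Function.Injective g := by
    intro u v huv
    rw [key u, key v] at huv
    have hne : a⁻¹ * (b ^ t)⁻¹ ≠ 0 := by
      simp [ha, hbt]
    have h1 := mul_left_cancel₀ hne huv
    have h2 := hGinj h1
    exact mul_left_cancel₀ hb h2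
  -- all zeros lie on the diagonal
  have hdiag : ∀ x y : F,
      MvPolynomial.eval ![x, y] (Hbar + MvPolynomial.C d) = 0 → y = x := by
    intro x y hxy
    have hev := congrArg (MvPolynomial.eval ![x, y]) hHbar
    simp only [map_mul, map_add, map_pow, MvPolynomial.eval_X, map_one,
      Matrix.cons_val_zero, Matrix.cons_val_one, Matrix.head_cons] at hev
    have hH : MvPolynomial.eval ![x, y] Hbar = d := by
      simp only [map_add, MvPolynomial.eval_C] at hxy
      have h := eq_neg_of_add_eq_zero_left hxy
      simpa [CharTwo.neg_eq] using h
    rw [hH] at hev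
    -- hev : (x + y) * d = (x+1)^t + x^t + (y+1)^t + y^t
    have hgsum : g x + g y = 0 := by
      rw [hgdef]
      simp only
      linear_combination hev + ((x + 1) ^ t + x ^ t + (y + 1) ^ t + y ^ t) * htwo
    have hgeq : g x = g y := by
      have := eq_neg_of_add_eq_zero_left hgsum
      simpa [CharTwo.neg_eq] using this
    exact (hginj hgeq).symm
  -- value of Hbar on the diagonal
  have hdiagval : ∀ x : F,
      MvPolynomial.eval ![x, x] Hbar
        = (x + 1) ^ (t - 1) * (t : F) + x ^ (t - 1) * (t : F) := by
    intro x
    set φ : MvPolynomial (Fin 2) F →ₐ[F] Polynomial F :=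
      MvPolynomial.aeval ![(Polynomial.C x : Polynomial F), Polynomial.C x + Polynomial.X] with hφdef
    have hφ := congrArg φ hHbar
    simp only [map_mul, map_add, map_pow, MvPolynomial.aeval_X, map_one, hφdef,
      Matrix.cons_val_zero, Matrix.cons_val_one, Matrix.head_cons] at hφ
    have hXX : (Polynomial.C x + (Polynomial.C x + Polynomial.X)) = (Polynomial.X : Polynomial F) := by
      rw [← add_assoc, ← Polynomial.C_add, CharTwo.add_self_eq_zero, Polynomial.C_0, zero_add]
    rw [hXX] at hφ
    have hcoeff := congrArg (fun p : Polynomial F => p.coeff 1) hφ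
    simp only [Polynomial.coeff_X_mul, Polynomial.coeff_add] at hcoeff
    have e1 : ((Polynomial.C x + 1 : Polynomial F) ^ t).coeff 1 = 0 := by
      rw [← Polynomial.C_1, ← Polynomial.C_add, ← Polynomial.C_pow, Polynomial.coeff_C]
      simp
    have e2 : ((Polynomial.C x : Polynomial F) ^ t).coeff 1 = 0 := by
      rw [← Polynomial.C_pow, Polynomial.coeff_C]
      simp
    have e3 : ((Polynomial.C x + Polynomial.X + 1 : Polynomial F) ^ t).coeff 1
        = (x + 1) ^ (t - 1) * (t : F) := by
      have : (Polynomial.C x + Polynomial.X + 1 : Polynomial F)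
          = Polynomial.X + Polynomial.C (x + 1) := by
        rw [Polynomial.C_add, Polynomial.C_1]; ring
      rw [this, Polynomial.coeff_X_add_C_pow]
      simp [Nat.choose_one_right]
    have e4 : ((Polynomial.C x + Polynomial.X : Polynomial F) ^ t).coeff 1
        = x ^ (t - 1) * (t : F) := by
      rw [add_comm, Polynomial.coeff_X_add_C_pow]
      simp [Nat.choose_one_right]
    rw [e1, e2, e3, e4] at hcoeff
    -- now relate coeff 0 of φ Hbar with eval at (x,x)
    have heval : (φ Hbar).coeff 0 = MvPolynomial.eval ![x, x] Hbar := by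
      rw [Polynomial.coeff_zero_eq_eval_zero]
      have hcomp : (Polynomial.aeval (0 : F)).comp φ = MvPolynomial.aeval ![x, x] := by
        apply MvPolynomial.algHom_ext
        intro i
        fin_cases i <;> simp [hφdef]
      have := congrArg (fun ψ : MvPolynomial (Fin 2) F →ₐ[F] F => ψ Hbar) hcomp
      simp only [AlgHom.comp_apply] at this
      rw [← Polynomial.coe_aeval_eq_eval, this]
      rw [show ⇑(MvPolynomial.aeval (R := F) ![x, x]) = ⇑(MvPolynomial.eval ![x, x]) from
        congrArg DFunLike.coe (MvPolynomial.coe_aeval_eq_eval _)]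
    rw [heval] at hcoeff
    rw [hcoeff]
    ring
  -- the univariate polynomial capturing diagonal zeros
  set P : Polynomial F :=
    Polynomial.C (t : F) * ((Polynomial.X + Polynomial.C 1) ^ (t - 1) + Polynomial.X ^ (t - 1))
      + Polynomial.C d with hP
  have hPeval : ∀ x : F, P.eval x = (t : F) * ((x + 1) ^ (t - 1) + x ^ (t - 1)) + d := by
    intro x
    simp [hP]
  have hProot : ∀ x : F,
      MvPolynomial.eval ![x, x] (Hbar + MvPolynomial.C d) = 0 → P.eval x = 0 := by
    intro x hx
    simp only [map_add, MvPolynomial.eval_C] at hx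
    rw [hdiagval x] at hx
    rw [hPeval x]
    linear_combination hx
  have hPne : P ≠ 0 := by
    intro h
    have h0 : P.eval 0 = 0 := by rw [h]; simp
    rw [hPeval 0] at h0
    have hz : (0 : F) ^ (t - 1) = 0 := by
      apply zero_pow
      omega
    rw [hz] at h0
    simp only [zero_add, add_zero] at h0
    rcases Nat.even_or_odd t with he | ho
    · have : (t : F) = 0 := by
        obtain ⟨k, hk⟩ := he
        have : (t : F) = 2 * (k : F) := by
          rw [hk]; push_cast; ring
        rw [this, htwo, zero_mul]
      rw [this] at h0
      simp only [zero_mul, zero_add] at h0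
      exact hd0 h0
    · have : (t : F) = 1 := by
        obtain ⟨k, hk⟩ := ho
        have : (t : F) = 2 * (k : F) + 1 := by
          rw [hk]; push_cast; ring
        rw [this, htwo, zero_mul, zero_add]
      rw [this, one_pow, one_mul] at h0
      have : d = 1 := by
        have := eq_neg_of_add_eq_zero_right h0
        simpa [CharTwo.neg_eq] using this
      exact hd1 this
  have hQdeg : ((Polynomial.X + Polynomial.C (1 : F)) ^ (t - 1)
      + Polynomial.X ^ (t - 1)).natDegree ≤ t - 2 := by
    rw [Polynomial.natDegree_le_iff_coeff_eq_zero]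
    intro m hm
    rw [Polynomial.coeff_add, Polynomial.coeff_X_add_C_pow, Polynomial.coeff_X_pow]
    rcases eq_or_lt_of_le (show t - 1 ≤ m by omega) with h | h
    · rw [← h]
      simp only [Nat.sub_self, pow_zero, Nat.choose_self, Nat.cast_one, one_mul, if_pos rfl]
      calc (1 : F) + 1 = 2 := by norm_num
        _ = 0 := htwo
    · rw [Nat.choose_eq_zero_of_lt h, if_neg (by omega)]
      simp
  have hPdeg : P.natDegree ≤ t - 2 := by
    rw [hP]
    refine (Polynomial.natDegree_add_le _ _).trans ?_
    rw [Polynomial.natDegree_C]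
    exact max_le ((Polynomial.natDegree_C_mul_le _ _).trans hQdeg) (Nat.zero_le _)
  -- counting
  have hcount : (Finset.univ.filter
      (fun xy : F × F =>
        MvPolynomial.eval ![xy.1, xy.2] (Hbar + MvPolynomial.C d) = 0)).card
      ≤ P.roots.toFinset.card := by
    apply Finset.card_le_card_of_injOn Prod.fst
    · intro p hp
      rw [Finset.mem_coe, Finset.mem_filter] at hp
      have hdg := hdiag p.1 p.2 hp.2
      have hz : MvPolynomial.eval ![p.1, p.1] (Hbar + MvPolynomial.C d) = 0 := by
        have h := hp.2
        rw [hdg] at h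
        exact h
      rw [Finset.mem_coe, Multiset.mem_toFinset, Polynomial.mem_roots hPne]
      exact hProot p.1 hz
    · intro p hp q hq hpq
      simp only [Finset.coe_filter, Set.mem_setOf_eq] at hp hq
      have hp2 := hdiag p.1 p.2 hp.2
      have hq2 := hdiag q.1 q.2 hq.2
      apply Prod.ext hpq
      rw [hp2, hq2, hpq]
  refine hcount.trans ?_
  calc P.roots.toFinset.card ≤ Multiset.card P.roots := Multiset.toFinset_card_le _
    _ ≤ P.natDegree := Polynomial.card_roots' P
    _ ≤ t - 2 := hPdeg
end

section
/- Let q = 2^r, let t be a positive integer, let a be a nonzero element of F_q, and suppose the function c ↦ a·c^t is planar on F_q. For d = a^{−1}·b^{2−t} with b a nonzero element of F_q, set f_d(X) = (X+1)^t + X^t + d·X ∈ F_q[X]. Then every pair (x,y) ∈ F_q × F_q with f_d(x) + f_d(y) = 0 satisfies x = y. -/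
theorem stmt_15 (r : ℕ) (F : Type*) [Field F] [Fintype F]
    (hcard : Fintype.card F = 2 ^ r) (t : ℕ) (ht : 0 < t)
    (a : F) (ha : a ≠ 0) (hplanar : IsPlanar (fun c : F => a * c ^ t))
    (b : F) (hb : b ≠ 0) (d : F) (hd : d = a⁻¹ * b ^ ((2 : ℤ) - t)) :
    ∀ x y : F, ((x + 1) ^ t + x ^ t + d * x) + ((y + 1) ^ t + y ^ t + d * y) = 0 → x = y := by
  intro x y hxy
  -- characteristic 2
  have h2 : (2 : F) = 0 := by
    have hc := FiniteField.cast_card_eq_zero F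
    rw [hcard] at hc
    push_cast at hc
    have hr : r ≠ 0 := by
      intro h
      have h1 := Fintype.one_lt_card (α := F)
      rw [hcard, h] at h1
      simp at h1
    exact pow_eq_zero_iff hr |>.mp hc
  have hneg : ∀ u : F, -u = u := by
    intro u
    have : u + u = 0 := by
      have := mul_eq_zero_of_left h2 u
      rwa [two_mul] at this
    exact neg_eq_iff_add_eq_zero.mpr this
  have hbt : b ^ t ≠ 0 := pow_ne_zero t hb
  have habd : a * b ^ t * d = b ^ 2 := by
    rw [hd, zpow_sub₀ hb, show ((2:ℤ)) = ((2:ℕ):ℤ) from rfl, zpow_natCast, zpow_natCast]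
    field_simp
  have key : ∀ z : F, a * b ^ t * ((z + 1) ^ t + z ^ t + d * z)
      = a * (b * z + b) ^ t + a * (b * z) ^ t + b * (b * z) := by
    intro z
    rw [show b * z + b = b * (z + 1) by ring, mul_pow, mul_pow]
    linear_combination z * habd
  have hbij := hplanar b hb
  have heq : a * (b * x + b) ^ t + a * (b * x) ^ t + b * (b * x)
      = a * (b * y + b) ^ t + a * (b * y) ^ t + b * (b * y) := by
    have h1 := key x
    have h2' := key y
    have hsum : (a * (b * x + b) ^ t + a * (b * x) ^ t + b * (b * x))
        + (a * (b * y + b) ^ t + a * (b * y) ^ t + b * (b * y)) = 0 := by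
      rw [← h1, ← h2', ← mul_add, hxy, mul_zero]
    have := hneg (a * (b * y + b) ^ t + a * (b * y) ^ t + b * (b * y))
    linear_combination hsum + this
  have := hbij.injective (a₁ := b * x) (a₂ := b * y) (by simpa using heq)
  exact mul_left_cancel₀ hb this
end

section
/- Let t be a positive integer which is not a power of 2, let K be an algebraic closure of F_2, and let H̄(X,Y) = ((X+1)^t + X^t + (Y+1)^t + Y^t)/(X+Y) ∈ F_2[X,Y]. If there exist a univariate polynomial F ∈ K[X] with deg F ≥ 2 and a polynomial G ∈ K[X,Y] such that H̄(X,Y) = F(G(X,Y)) in K[X,Y], then t is the sum of exactly two distinct powers of 2 (i.e., the binary expansion of t has exactly two nonzero digits). -/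
open Polynomial

theorem rm_pow' {R : Type*} [CommRing R] [IsDomain R] (p : R[X]) (hp : p ≠ 0) (n : ℕ) (x : R) :
    rootMultiplicity x (p ^ n) = n * rootMultiplicity x p := by
  induction n with
  | zero => simp [Polynomial.rootMultiplicity_eq_zero, Polynomial.IsRoot]
  | succ n ih =>
      rw [pow_succ, Polynomial.rootMultiplicity_mul (mul_ne_zero (pow_ne_zero _ hp) hp), ih]
      ring

theorem odd_cast_eq_one {K : Type*} [Field K] [CharP K 2] {u : ℕ} (h : u % 2 = 1) :
    (u : K) = 1 := by
  obtain ⟨m, hm⟩ : ∃ m, u = 2 * m + 1 := ⟨u / 2, by omega⟩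
  have h2 : (2 : K) = 0 := by exact_mod_cast CharP.cast_eq_zero K 2
  rw [hm]
  push_cast
  rw [h2]
  ring

theorem aux_main {K : Type*} [Field K] [IsAlgClosed K] [CharP K 2]
    (t : ℕ) (ht : 0 < t) (htn : ¬ ∃ k : ℕ, t = 2 ^ k)
    (F : K[X]) (hF : 2 ≤ F.natDegree)
    (G : MvPolynomial (Fin 2) K)
    (hH : (MvPolynomial.X 0 + MvPolynomial.X 1) * (Polynomial.aeval G F) =
        (MvPolynomial.X 0 + 1) ^ t + (MvPolynomial.X 0) ^ t +
        (MvPolynomial.X 1 + 1) ^ t + (MvPolynomial.X 1) ^ t) :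
    ∃ i j : ℕ, i < j ∧ t = 2 ^ i + 2 ^ j := by
  haveI : Fact (Nat.Prime 2) := ⟨Nat.prime_two⟩
  set a := t.factorization 2 with ha
  set u := t / 2 ^ a with hudef
  have htu : 2 ^ a * u = t := Nat.ordProj_mul_ordCompl_eq_self t 2
  have hu_odd : ¬ 2 ∣ u := Nat.not_dvd_ordCompl Nat.prime_two ht.ne'
  clear_value a u
  have hu1 : u ≠ 1 := fun h => htn ⟨a, by rw [← htu, h, mul_one]⟩
  have hq0 : 0 < 2 ^ a := Nat.pow_pos (by norm_num)
  have hu0 : u ≠ 0 := by intro h; rw [h, mul_zero] at htu; omega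
  have hum : u % 2 = 1 := by
    have := Nat.dvd_iff_mod_eq_zero.not.mp hu_odd
    omega
  have hu3 : 3 ≤ u ∧ u % 2 = 1 := by omega
  -- the univariate polynomial g = (X+1)^u + X^u over K
  set g : K[X] := (X + 1) ^ u + X ^ u with hg
  have hgcoeff : ∀ k, g.coeff k = (u.choose k : K) + if k = u then 1 else 0 := by
    intro k
    simp [hg, Polynomial.coeff_X_add_one_pow, Polynomial.coeff_X_pow]
  have h2K : ((2 : ℕ) : K) = 0 := CharP.cast_eq_zero K 2
  have hgtop : ∀ N, u - 1 < N → g.coeff N = 0 := by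
    intro N hN
    rw [hgcoeff]
    rcases eq_or_ne N u with rfl | hNe
    · simp [Nat.choose_self]
      have : ((2 : ℕ) : K) = 0 := h2K
      push_cast at this ⊢
      linear_combination this
    · have : u < N := by omega
      rw [Nat.choose_eq_zero_of_lt this]
      simp [hNe]
  have hglead : g.coeff (u - 1) = 1 := by
    rw [hgcoeff]
    have h1 : u.choose (u - 1) = u := by
      rw [Nat.choose_symm (by omega : 1 ≤ u), Nat.choose_one_right]
    rw [h1, if_neg (by omega)]
    rw [odd_cast_eq_one hu3.2]
    ring
  have hgnd : g.natDegree = u - 1 := by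
    apply le_antisymm
    · exact Polynomial.natDegree_le_iff_coeff_eq_zero.2 hgtop
    · exact Polynomial.le_natDegree_of_ne_zero (by rw [hglead]; exact one_ne_zero)
  have hglc : g.leadingCoeff = 1 := by
    rw [Polynomial.leadingCoeff, hgnd, hglead]
  have hgmonic : g.Monic := hglc
  -- M = g(X0) + g(X1)
  set M : MvPolynomial (Fin 2) K :=
    Polynomial.aeval (MvPolynomial.X 0) g + Polynomial.aeval (MvPolynomial.X 1) g with hM
  have hgq : g ^ 2 ^ a = (X + 1) ^ t + X ^ t := by
    rw [hg, add_pow_char_pow, ← pow_mul, ← pow_mul, mul_comm u (2 ^ a), htu]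
  have hMq : M ^ 2 ^ a =
      (MvPolynomial.X 0 + 1) ^ t + (MvPolynomial.X 0 : MvPolynomial (Fin 2) K) ^ t +
      (MvPolynomial.X 1 + 1) ^ t + (MvPolynomial.X 1) ^ t := by
    rw [hM, add_pow_char_pow, ← map_pow, ← map_pow, hgq]
    simp only [map_add, map_pow, Polynomial.aeval_X, map_one]
    ring
  -- the homogenizing map Φ
  set Φ : MvPolynomial (Fin 2) K →ₐ[K] Polynomial (MvPolynomial (Fin 2) K) :=
    MvPolynomial.aeval (fun i => Polynomial.C (MvPolynomial.X i) * Polynomial.X) with hΦ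
  have hΦaeval : ∀ (x : MvPolynomial (Fin 2) K) (g' : K[X]),
      Φ (Polynomial.aeval x g') = (g'.map MvPolynomial.C).comp (Φ x) := by
    intro x g'
    rw [← Polynomial.aeval_algHom_apply, Polynomial.aeval_def, Polynomial.comp,
      Polynomial.eval₂_map]
    rfl
  have hΦX : ∀ i : Fin 2, Φ (MvPolynomial.X i) =
      Polynomial.C (MvPolynomial.X i) * Polynomial.X := by
    intro i
    simp [hΦ]
  -- Φ M facts
  set gC : Polynomial (MvPolynomial (Fin 2) K) := g.map MvPolynomial.C with hgC
  have hgCnd : gC.natDegree = u - 1 := by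
    rw [hgC, Polynomial.natDegree_map_eq_of_injective (MvPolynomial.C_injective (Fin 2) K), hgnd]
  have hgClc : gC.leadingCoeff = 1 := (hgmonic.map _ : (g.map (MvPolynomial.C : K →+* _)).Monic)
  have hWnd : ∀ i : Fin 2,
      (Polynomial.C (MvPolynomial.X (R := K) i) * Polynomial.X).natDegree = 1 :=
    fun i => Polynomial.natDegree_C_mul_X _ (MvPolynomial.X_ne_zero i)
  have hWlc : ∀ i : Fin 2,
      (Polynomial.C (MvPolynomial.X (R := K) i) * Polynomial.X).leadingCoeff =
        MvPolynomial.X i := fun i => Polynomial.leadingCoeff_C_mul_X _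
  have hcompnd : ∀ i : Fin 2,
      (gC.comp (Polynomial.C (MvPolynomial.X i) * Polynomial.X)).natDegree = u - 1 := by
    intro i
    rw [Polynomial.natDegree_comp, hgCnd, hWnd, mul_one]
  have hcomplc : ∀ i : Fin 2,
      (gC.comp (Polynomial.C (MvPolynomial.X i) * Polynomial.X)).leadingCoeff =
        MvPolynomial.X i ^ (u - 1) := by
    intro i
    rw [Polynomial.leadingCoeff_comp (by rw [hWnd]; exact one_ne_zero), hgClc, hWlc, hgCnd,
      one_mul]
  have hΦM : Φ M = gC.comp (Polynomial.C (MvPolynomial.X 0) * Polynomial.X)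
      + gC.comp (Polynomial.C (MvPolynomial.X 1) * Polynomial.X) := by
    rw [hM, map_add, hΦaeval, hΦaeval, hΦX, hΦX]
  have hpowne : (MvPolynomial.X 0 ^ (u - 1) + MvPolynomial.X 1 ^ (u - 1) :
      MvPolynomial (Fin 2) K) ≠ 0 := by
    intro h
    have := congrArg (MvPolynomial.eval (fun j : Fin 2 => if j = 0 then (1 : K) else 0)) h
    simp [zero_pow (by omega : u - 1 ≠ 0)] at this
  have hcocoeff : ∀ i : Fin 2,
      (gC.comp (Polynomial.C (MvPolynomial.X i) * Polynomial.X)).coeff (u - 1) =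
        MvPolynomial.X i ^ (u - 1) := by
    intro i
    conv_lhs =>
      rw [show (u - 1) = (gC.comp (Polynomial.C (MvPolynomial.X i) * Polynomial.X)).natDegree
        from (hcompnd i).symm]
    rw [Polynomial.coeff_natDegree, hcomplc]
  have hΦMcoeff : (Φ M).coeff (u - 1) =
      MvPolynomial.X 0 ^ (u - 1) + MvPolynomial.X 1 ^ (u - 1) := by
    rw [hΦM, Polynomial.coeff_add, hcocoeff 0, hcocoeff 1]
  have hΦMnd : (Φ M).natDegree = u - 1 := by
    apply le_antisymm
    · rw [hΦM]
      refine le_trans (Polynomial.natDegree_add_le _ _) ?_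
      rw [hcompnd 0, hcompnd 1]
      simp
    · exact Polynomial.le_natDegree_of_ne_zero (by rw [hΦMcoeff]; exact hpowne)
  have hΦMlc : (Φ M).leadingCoeff =
      MvPolynomial.X 0 ^ (u - 1) + MvPolynomial.X 1 ^ (u - 1) := by
    rw [Polynomial.leadingCoeff, hΦMnd, hΦMcoeff]
  have hΦMne : Φ M ≠ 0 := by
    intro h
    rw [h, Polynomial.leadingCoeff_zero] at hΦMlc
    exact hpowne hΦMlc.symm
  -- Φ of X0 + X1
  have hΦxy : Φ (MvPolynomial.X 0 + MvPolynomial.X 1) =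
      Polynomial.C (MvPolynomial.X 0 + MvPolynomial.X 1) * Polynomial.X := by
    rw [map_add, hΦX, hΦX, map_add, add_mul]
  have hxyne : (MvPolynomial.X 0 + MvPolynomial.X 1 : MvPolynomial (Fin 2) K) ≠ 0 := by
    intro h
    have := congrArg (MvPolynomial.eval (fun j : Fin 2 => if j = 0 then (1 : K) else 0)) h
    simp at this
  -- main equation, under Φ
  have hmain : Φ (MvPolynomial.X 0 + MvPolynomial.X 1) * Φ (Polynomial.aeval G F) =
      (Φ M) ^ 2 ^ a := by
    rw [← map_mul, ← map_pow, hMq, hH]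
  -- F composed
  set FC : Polynomial (MvPolynomial (Fin 2) K) := F.map MvPolynomial.C with hFC
  have hΦH : Φ (Polynomial.aeval G F) = FC.comp (Φ G) := hΦaeval G F
  have hFne : F ≠ 0 := fun h => by simp [h] at hF
  have hFCnd : FC.natDegree = F.natDegree := by
    rw [hFC, Polynomial.natDegree_map_eq_of_injective (MvPolynomial.C_injective (Fin 2) K)]
  have hFClc : FC.leadingCoeff = MvPolynomial.C F.leadingCoeff := by
    rw [hFC, Polynomial.leadingCoeff_map]
  -- degrees: Φ G is nonconstant
  have hΦHne : Φ (Polynomial.aeval G F) ≠ 0 := by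
    intro h
    rw [h, mul_zero] at hmain
    exact pow_ne_zero _ hΦMne hmain.symm
  have hΦxynd : (Φ (MvPolynomial.X 0 + MvPolynomial.X 1)).natDegree = 1 := by
    rw [hΦxy]
    exact Polynomial.natDegree_C_mul_X _ hxyne
  have hΦxyne : Φ (MvPolynomial.X 0 + MvPolynomial.X 1) ≠ 0 := by
    intro h
    rw [h] at hΦxynd
    simp at hΦxynd
  have hndeq : 1 + (Φ (Polynomial.aeval G F)).natDegree = 2 ^ a * (u - 1) := by
    have := congrArg Polynomial.natDegree hmain
    rwa [Polynomial.natDegree_mul hΦxyne hΦHne, Polynomial.natDegree_pow, hΦxynd, hΦMnd] at this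
  have hΦGnd : (Φ G).natDegree ≠ 0 := by
    intro h
    rw [hΦH, Polynomial.natDegree_comp, h, mul_zero] at hndeq
    have h2a : 2 ≤ 2 ^ a * (u - 1) := by
      calc 2 ≤ u - 1 := by omega
      _ = 1 * (u - 1) := (one_mul _).symm
      _ ≤ 2 ^ a * (u - 1) := Nat.mul_le_mul_right _ hq0
    omega
  -- leading coefficients of main equation
  set n := F.natDegree with hn
  set P := (Φ G).leadingCoeff with hP
  have hlcmain : (MvPolynomial.X 0 + MvPolynomial.X 1) *
      (MvPolynomial.C F.leadingCoeff * P ^ n) =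
      (MvPolynomial.X 0 ^ (u - 1) + MvPolynomial.X 1 ^ (u - 1)) ^ 2 ^ a := by
    have := congrArg Polynomial.leadingCoeff hmain
    rwa [Polynomial.leadingCoeff_mul, Polynomial.leadingCoeff_pow, hΦMlc, hΦxy,
      Polynomial.leadingCoeff_C_mul_X, hΦH,
      Polynomial.leadingCoeff_comp hΦGnd, hFClc, hFCnd] at this
  -- specialize X1 := 1
  set ψ : MvPolynomial (Fin 2) K →ₐ[K] K[X] :=
    MvPolynomial.aeval (fun i : Fin 2 => if i = 0 then Polynomial.X else 1) with hψ
  set p : K[X] := ψ P with hp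
  set c := F.leadingCoeff with hc
  have hcne : c ≠ 0 := Polynomial.leadingCoeff_ne_zero.mpr hFne
  have huni : (Polynomial.X + 1) * (Polynomial.C c * p ^ n) =
      ((Polynomial.X : K[X]) ^ (u - 1) + 1) ^ 2 ^ a := by
    have := congrArg ψ hlcmain
    simpa [hψ, map_add, map_mul, map_pow, map_one, MvPolynomial.aeval_X,
      MvPolynomial.aeval_C, Polynomial.algebraMap_eq] using this
  -- write u - 1 = 2^e * v with v odd
  set e := (u - 1).factorization 2 with he
  set v := (u - 1) / 2 ^ e with hv
  have htv : 2 ^ e * v = u - 1 := Nat.ordProj_mul_ordCompl_eq_self (u - 1) 2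
  have hv_odd : ¬ 2 ∣ v := Nat.not_dvd_ordCompl Nat.prime_two (by omega)
  have he1 : 1 ≤ e := Nat.Prime.factorization_pos_of_dvd Nat.prime_two (by omega) (by omega)
  clear_value e v
  have hv0 : v ≠ 0 := by intro h; rw [h, mul_zero] at htv; omega
  have hvm : v % 2 = 1 := by
    have := Nat.dvd_iff_mod_eq_zero.not.mp hv_odd
    omega
  have hXpow : ((X : K[X]) ^ (u - 1) + 1) = (X ^ v + 1) ^ 2 ^ e := by
    rw [add_pow_char_pow, one_pow, ← pow_mul, mul_comm v (2 ^ e), htv]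
  have huni2 : (Polynomial.X + 1) * (Polynomial.C c * p ^ n) =
      ((Polynomial.X : K[X]) ^ v + 1) ^ (2 ^ e * 2 ^ a) := by
    rw [huni, hXpow, ← pow_mul]
  set Q := 2 ^ e * 2 ^ a with hQ
  rcases eq_or_ne v 1 with hv1 | hv1
  · -- t = 2^a + 2^(a+e)
    subst hv1
    rw [mul_one] at htv
    refine ⟨a, a + e, by omega, ?_⟩
    have hu2 : u = 2 ^ e + 1 := by omega
    have hpw : (2 : ℕ) ^ (a + e) = 2 ^ a * 2 ^ e := pow_add 2 a e
    have h3 : t = 2 ^ a * 2 ^ e + 2 ^ a := by rw [← htu, hu2, Nat.mul_add, mul_one]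
    omega
  · exfalso
    have hv3 : 3 ≤ v := by omega
    set T : K[X] := Polynomial.X ^ v - Polynomial.C 1 with hT
    have hvK : (v : K) ≠ 0 := by rw [odd_cast_eq_one hvm]; exact one_ne_zero
    have hTsep : T.Separable := by
      rw [hT, map_one]
      exact Polynomial.X_pow_sub_one_separable_iff.mpr hvK
    have hTsf : Squarefree T := hTsep.squarefree
    have hT0 : T ≠ 0 := hTsf.ne_zero
    have hTeq : (Polynomial.X : K[X]) ^ v + 1 = T := by
      rw [hT, map_one, CharTwo.sub_eq_add]
    have hE : (Polynomial.X + 1) * (Polynomial.C c * p ^ n) = T ^ Q := by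
      rw [← hTeq]; exact huni2
    have hTQne : T ^ Q ≠ 0 := pow_ne_zero _ hT0
    have hpne : p ≠ 0 := by
      intro h
      rw [h, zero_pow (by omega : n ≠ 0), mul_zero, mul_zero] at hE
      exact hTQne hE.symm
    have hrm1 : ∀ z : K, T.IsRoot z → T.rootMultiplicity z = 1 := by
      intro z hz
      have hge := (Polynomial.rootMultiplicity_pos hT0).mpr hz
      have hle : T.rootMultiplicity z ≤ 1 := by
        by_contra hgt
        push_neg at hgt
        have hdvd : (Polynomial.X - Polynomial.C z) ^ 2 ∣ T :=
          dvd_trans (pow_dvd_pow _ (by omega)) (Polynomial.pow_rootMultiplicity_dvd T z)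
        have hunit := hTsf (Polynomial.X - Polynomial.C z) (by rwa [← sq])
        exact Polynomial.not_isUnit_of_degree_pos _
          (by rw [Polynomial.degree_X_sub_C]; norm_num) hunit
      omega
    -- find a root ζ ≠ 1 of T
    set S : K[X] := ∑ i ∈ Finset.range v, Polynomial.X ^ i with hS
    have hSmul : S * (Polynomial.X - 1) = T := by
      rw [hS, geom_sum_mul, hT, map_one]
    have hX1ne : (Polynomial.X - 1 : K[X]) ≠ 0 := by
      rw [show (1 : K[X]) = Polynomial.C 1 from (map_one _).symm]
      exact Polynomial.X_sub_C_ne_zero 1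
    have hSne : S ≠ 0 := by intro h; rw [h, zero_mul] at hSmul; exact hT0 hSmul.symm
    have hSnd : S.natDegree = v - 1 := by
      have h1 := congrArg Polynomial.natDegree hSmul
      rw [Polynomial.natDegree_mul hSne hX1ne] at h1
      rw [hT, Polynomial.natDegree_X_pow_sub_C] at h1
      rw [show (1 : K[X]) = Polynomial.C 1 from (map_one _).symm,
        Polynomial.natDegree_X_sub_C] at h1
      omega
    have hSdeg : S.degree ≠ 0 := by
      intro hdeg
      have h0 := Polynomial.natDegree_eq_zero_iff_degree_le_zero.mpr (le_of_eq hdeg)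
      omega
    obtain ⟨ζ, hζ⟩ := IsAlgClosed.exists_root S hSdeg
    have hζT : T.IsRoot ζ := by
      rw [← hSmul, Polynomial.IsRoot, Polynomial.eval_mul, hζ, zero_mul]
    have h2K' : (2 : K) = 0 := by exact_mod_cast h2K
    have hζ1 : ζ ≠ 1 := by
      intro h
      rw [h] at hζ
      have hev : Polynomial.eval 1 S = (v : K) := by
        simp [hS, Polynomial.eval_finset_sum]
      rw [Polynomial.IsRoot, hev] at hζ
      exact hvK hζ
    have h1T : T.IsRoot 1 := by simp [hT, Polynomial.IsRoot]
    have hCcne : (Polynomial.C c : K[X]) ≠ 0 := Polynomial.C_ne_zero.mpr hcne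
    have hrmEq : ∀ z : K,
        Polynomial.rootMultiplicity z (Polynomial.X + 1 : K[X]) +
          (0 + n * Polynomial.rootMultiplicity z p) =
        Q * Polynomial.rootMultiplicity z T := by
      intro z
      have h1 := congrArg (Polynomial.rootMultiplicity z) hE
      rw [Polynomial.rootMultiplicity_mul (by rw [hE]; exact hTQne),
        Polynomial.rootMultiplicity_mul (mul_ne_zero hCcne (pow_ne_zero _ hpne)),
        Polynomial.rootMultiplicity_C, rm_pow' p hpne, rm_pow' T hT0] at h1
      exact h1
    have hX1 : (Polynomial.X + 1 : K[X]) = Polynomial.X - Polynomial.C 1 := by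
      rw [map_one, CharTwo.sub_eq_add]
    have rm1X : Polynomial.rootMultiplicity 1 (Polynomial.X + 1 : K[X]) = 1 := by
      rw [hX1]; exact Polynomial.rootMultiplicity_X_sub_C_self
    have rmζX : Polynomial.rootMultiplicity ζ (Polynomial.X + 1 : K[X]) = 0 := by
      apply Polynomial.rootMultiplicity_eq_zero
      intro hroot
      rw [Polynomial.IsRoot, Polynomial.eval_add, Polynomial.eval_X, Polynomial.eval_one] at hroot
      exact hζ1 (by linear_combination hroot - h2K')
    have e1 := hrmEq 1
    rw [rm1X, hrm1 1 h1T] at e1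
    have e2 := hrmEq ζ
    rw [rmζX, hrm1 ζ hζT] at e2
    have hsub : n * Polynomial.rootMultiplicity ζ p - n * Polynomial.rootMultiplicity 1 p = 1 := by
      omega
    have hdvd1 : n ∣ 1 := hsub ▸ Nat.dvd_sub ⟨_, rfl⟩ ⟨_, rfl⟩
    have := Nat.le_of_dvd one_pos hdvd1
    omega


theorem stmt_16 (t : ℕ) (ht : 0 < t) (htn : ¬ ∃ k : ℕ, t = 2 ^ k)
    (Hbar : MvPolynomial (Fin 2) (ZMod 2))
    (hHbar : (MvPolynomial.X 0 + MvPolynomial.X 1) * Hbar =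
        (MvPolynomial.X 0 + 1) ^ t + (MvPolynomial.X 0) ^ t +
        (MvPolynomial.X 1 + 1) ^ t + (MvPolynomial.X 1) ^ t)
    (F : Polynomial (AlgebraicClosure (ZMod 2))) (hF : 2 ≤ F.natDegree)
    (G : MvPolynomial (Fin 2) (AlgebraicClosure (ZMod 2)))
    (hFG : MvPolynomial.map (algebraMap (ZMod 2) (AlgebraicClosure (ZMod 2))) Hbar =
        Polynomial.aeval G F) :
    ∃ i j : ℕ, i < j ∧ t = 2 ^ i + 2 ^ j := by
  have hmap := congrArg (MvPolynomial.map (algebraMap (ZMod 2) (AlgebraicClosure (ZMod 2)))) hHbar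
  rw [map_mul, map_add, map_add, map_add, map_add, map_pow, map_pow, map_pow, map_pow,
    map_add, map_add, map_one, MvPolynomial.map_X, MvPolynomial.map_X, hFG] at hmap
  exact aux_main t ht htn F hF G hmap
end
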